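/- The fixed-point system defining the deterministic equivalents has exactly one entrywise-positive solution: there exists a unique pair (φ, ψ) ∈ (0,∞)^K × (0,∞)^N such that φ_i · α(1 + N⁻¹ Σ_{j=1}^{N} θ_{ij} ψ_j) = 1 for all 1 ≤ i ≤ K and ψ_j · α(1 + N⁻¹ Σ_{i=1}^{K} θ_{ij} φ_i) = 1 for all 1 ≤ j ≤ N. -/

import Mathlib

open Matrix

namespace FPaux

noncomputable def F {ι : Type*} [Fintype ι] (α m : ℝ) (c x : ι → ℝ) : ℝ :=
  (α * (1 + m * ∑ i, c i * x i))⁻¹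

variable {ι : Type*} [Fintype ι] {α m : ℝ} {c x y : ι → ℝ}

lemma sum_nn (hc : ∀ i, 0 ≤ c i) (hx : ∀ i, 0 ≤ x i) : 0 ≤ ∑ i, c i * x i :=
  Finset.sum_nonneg fun i _ => mul_nonneg (hc i) (hx i)

lemma denom_pos (hα : 0 < α) (hm : 0 ≤ m) {S : ℝ} (hS : 0 ≤ S) :
    0 < α * (1 + m * S) := by nlinarith [mul_nonneg hm hS]

lemma F_pos (hα : 0 < α) (hm : 0 ≤ m) (hc : ∀ i, 0 ≤ c i) (hx : ∀ i, 0 ≤ x i) :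
    0 < F α m c x :=
  inv_pos.2 (denom_pos hα hm (sum_nn hc hx))

lemma F_le (hα : 0 < α) (hm : 0 ≤ m) (hc : ∀ i, 0 ≤ c i) (hx : ∀ i, 0 ≤ x i) :
    F α m c x ≤ α⁻¹ := by
  apply inv_anti₀ hα
  nlinarith [mul_nonneg hm (sum_nn hc hx)]

lemma F_anti (hα : 0 < α) (hm : 0 ≤ m) (hc : ∀ i, 0 ≤ c i)
    (hx : ∀ i, 0 ≤ x i) (hxy : ∀ i, x i ≤ y i) : F α m c y ≤ F α m c x := by
  apply inv_anti₀ (denom_pos hα hm (sum_nn hc hx))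
  have hs : ∑ i, c i * x i ≤ ∑ i, c i * y i :=
    Finset.sum_le_sum fun i _ => mul_le_mul_of_nonneg_left (hxy i) (hc i)
  nlinarith [mul_le_mul_of_nonneg_left hs (mul_nonneg hα.le hm)]

/-- scaled lower bound: if `x ≤ t • y` with `t ≥ 1`, then `F x ≥ t⁻¹ • F y`. -/
lemma F_scaled (hα : 0 < α) (hm : 0 ≤ m) (hc : ∀ i, 0 ≤ c i)
    {t : ℝ} (ht : 1 ≤ t) (hx : ∀ i, 0 ≤ x i) (hy : ∀ i, 0 ≤ y i)
    (hxy : ∀ i, x i ≤ t * y i) :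
    t⁻¹ * F α m c y ≤ F α m c x := by
  have hSy : 0 ≤ ∑ i, c i * y i := sum_nn hc hy
  have hs : ∑ i, c i * x i ≤ t * ∑ i, c i * y i := by
    rw [Finset.mul_sum]
    exact Finset.sum_le_sum fun i _ => by
      have h1 := mul_le_mul_of_nonneg_left (hxy i) (hc i); nlinarith
  have hdx : 0 < α * (1 + m * ∑ i, c i * x i) := denom_pos hα hm (sum_nn hc hx)
  have hkey : α * (1 + m * ∑ i, c i * x i) ≤ t * (α * (1 + m * ∑ i, c i * y i)) := by
    nlinarith [mul_le_mul_of_nonneg_left hs (mul_nonneg hα.le hm), mul_nonneg (mul_nonneg hα.le hm) hSy]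
  have h2 := inv_anti₀ hdx hkey
  rw [mul_inv] at h2
  exact h2

end FPaux

open FPaux

/-- Uniqueness direction: for two positive solutions, `ψ' ≤ ψ` pointwise. -/
lemma psi_le_psi {K N : ℕ} (hN : 0 < N)
    (θ : Matrix (Fin K) (Fin N) ℝ) (hθ : ∀ i j, 0 ≤ θ i j) {α : ℝ} (hα : 0 < α)
    {φ φ' : Fin K → ℝ} {ψ ψ' : Fin N → ℝ}
    (hψpos : ∀ j, 0 < ψ j) (hψ'pos : ∀ j, 0 < ψ' j)
    (hφ : ∀ i, φ i = F α (N : ℝ)⁻¹ (fun j => θ i j) ψ)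
    (hφ' : ∀ i, φ' i = F α (N : ℝ)⁻¹ (fun j => θ i j) ψ')
    (hψ : ∀ j, ψ j = F α (N : ℝ)⁻¹ (fun i => θ i j) φ)
    (hψ' : ∀ j, ψ' j = F α (N : ℝ)⁻¹ (fun i => θ i j) φ') :
    ∀ j, ψ' j ≤ ψ j := by
  have hm : (0:ℝ) ≤ (N : ℝ)⁻¹ := by positivity
  obtain ⟨j₀, -, hj₀⟩ := Finset.exists_max_image Finset.univ (fun j => ψ' j / ψ j)
    ⟨⟨0, hN⟩, Finset.mem_univ _⟩
  set t : ℝ := ψ' j₀ / ψ j₀ with htdef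
  have ht0 : 0 < t := div_pos (hψ'pos j₀) (hψpos j₀)
  have hle : ∀ j, ψ' j ≤ t * ψ j := fun j =>
    (div_le_iff₀ (hψpos j)).mp (by simpa using hj₀ j (Finset.mem_univ j))
  suffices ht1 : t ≤ 1 by
    intro j
    calc ψ' j ≤ t * ψ j := hle j
    _ ≤ 1 * ψ j := mul_le_mul_of_nonneg_right ht1 (hψpos j).le
    _ = ψ j := one_mul _
  by_contra h
  push_neg at h
  have ht1 : 1 ≤ t := h.le
  -- lower bound on φ'
  have hφlow : ∀ i, t⁻¹ * φ i ≤ φ' i := by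
    intro i
    rw [hφ, hφ']
    exact F_scaled hα hm (fun j => hθ i j) ht1
      (fun j => (hψ'pos j).le) (fun j => (hψpos j).le) hle
  -- key estimate at j₀
  have hφpos : ∀ i, 0 < φ i := fun i => (hφ i) ▸
    F_pos hα hm (fun j => hθ i j) (fun j => (hψpos j).le)
  set S : ℝ := ∑ i, θ i j₀ * φ i with hSdef
  have hS : 0 ≤ S := sum_nn (fun i => hθ i j₀) (fun i => (hφpos i).le)
  have hsum : t⁻¹ * S ≤ ∑ i, θ i j₀ * φ' i := by
    rw [hSdef, Finset.mul_sum]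
    exact Finset.sum_le_sum fun i _ => by
      have h1 := mul_le_mul_of_nonneg_left (hφlow i) (hθ i j₀); nlinarith [hθ i j₀]
  have hB : 0 < α * (1 + (N : ℝ)⁻¹ * (t⁻¹ * S)) :=
    denom_pos hα hm (by positivity)
  have hA : 0 < α * (1 + (N : ℝ)⁻¹ * S) := denom_pos hα hm hS
  have hψ'le : ψ' j₀ ≤ (α * (1 + (N : ℝ)⁻¹ * (t⁻¹ * S)))⁻¹ := by
    rw [hψ' j₀]
    apply inv_anti₀ hB
    have : (N : ℝ)⁻¹ * (t⁻¹ * S) ≤ (N : ℝ)⁻¹ * ∑ i, θ i j₀ * φ' i :=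
      mul_le_mul_of_nonneg_left hsum hm
    nlinarith
  have hψ'eq : ψ' j₀ = t * ψ j₀ := by
    rw [htdef, div_mul_cancel₀ _ (ne_of_gt (hψpos j₀))]
  have hψj₀ : ψ j₀ = (α * (1 + (N : ℝ)⁻¹ * S))⁻¹ := by rw [hψ j₀]; rfl
  have hmain : t * (α * (1 + (N : ℝ)⁻¹ * S))⁻¹ ≤ (α * (1 + (N : ℝ)⁻¹ * (t⁻¹ * S)))⁻¹ := by
    rw [← hψj₀, ← hψ'eq]; exact hψ'le
  have h2 : (α * (1 + (N : ℝ)⁻¹ * (t⁻¹ * S))) * t ≤ α * (1 + (N : ℝ)⁻¹ * S) :=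
    (le_inv_mul_iff₀ hB).mp ((mul_inv_le_iff₀ hA).mp hmain)
  have h3 : (α * (1 + (N : ℝ)⁻¹ * (t⁻¹ * S))) * t = t * α + α * ((N : ℝ)⁻¹ * S) := by
    field_simp
  nlinarith [mul_nonneg hm hS]

/-- **Existence and uniqueness of the entrywise-positive fixed point** of the
deterministic-equivalent system (7)–(8) at `z = −α`: there is exactly one pair
`(φ, ψ)` with all entries positive satisfying
`φ_i · α(1 + N⁻¹ Σ_j θ_{ij} ψ_j) = 1` and `ψ_j · α(1 + N⁻¹ Σ_i θ_{ij} φ_i) = 1`. -/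
theorem fixed_point_existence_uniqueness
    (K N : ℕ) (hK : 0 < K) (hN : 0 < N)
    (θ : Matrix (Fin K) (Fin N) ℝ) (hθ : ∀ i j, 0 ≤ θ i j)
    (α : ℝ) (hα : 0 < α) :
    ∃! p : (Fin K → ℝ) × (Fin N → ℝ),
      (∀ i, 0 < p.1 i) ∧ (∀ j, 0 < p.2 j) ∧
      (∀ i, p.1 i * (α * (1 + (N : ℝ)⁻¹ * ∑ j, θ i j * p.2 j)) = 1) ∧
      (∀ j, p.2 j * (α * (1 + (N : ℝ)⁻¹ * ∑ i, θ i j * p.1 i)) = 1) := by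
  have hm : (0:ℝ) ≤ (N : ℝ)⁻¹ := by positivity
  haveI : Fact ((0:ℝ) ≤ α⁻¹) := ⟨by positivity⟩
  -- the monotone composed map on the complete lattice (Fin N → Icc 0 α⁻¹)
  set Φ : (Fin N → ℝ) → (Fin K → ℝ) :=
    fun ψ i => F α (N : ℝ)⁻¹ (fun j => θ i j) ψ with hΦdef
  set Tf : (Fin N → ℝ) → (Fin N → ℝ) :=
    fun ψ j => F α (N : ℝ)⁻¹ (fun i => θ i j) (Φ ψ) with hTfdef
  have hΦpos : ∀ ψ, (∀ j, 0 ≤ ψ j) → ∀ i, 0 < Φ ψ i := fun ψ hψ i =>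
    F_pos hα hm (fun j => hθ i j) hψ
  have hTfpos : ∀ ψ, (∀ j, 0 ≤ ψ j) → ∀ j, 0 < Tf ψ j := fun ψ hψ j =>
    F_pos hα hm (fun i => hθ i j) (fun i => (hΦpos ψ hψ i).le)
  have hTfle : ∀ ψ, (∀ j, 0 ≤ ψ j) → ∀ j, Tf ψ j ≤ α⁻¹ := fun ψ hψ j =>
    F_le hα hm (fun i => hθ i j) (fun i => (hΦpos ψ hψ i).le)
  have hTfmono : ∀ ψ ψ' : Fin N → ℝ, (∀ j, 0 ≤ ψ j) → (∀ j, ψ j ≤ ψ' j) →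
      ∀ j, Tf ψ j ≤ Tf ψ' j := by
    intro ψ ψ' hψ hle j
    have h1 : ∀ i, Φ ψ' i ≤ Φ ψ i := fun i =>
      F_anti hα hm (fun j => hθ i j) hψ hle
    exact F_anti hα hm (fun i => hθ i j) (fun i => (hΦpos ψ' (fun j =>
      le_trans (hψ j) (hle j)) i).le) h1
  let T : (Fin N → Set.Icc (0:ℝ) α⁻¹) →o (Fin N → Set.Icc (0:ℝ) α⁻¹) :=
    ⟨fun ψ j => ⟨Tf (fun j' => (ψ j' : ℝ)) j,
      (hTfpos _ (fun j' => (ψ j').2.1) j).le,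
      hTfle _ (fun j' => (ψ j').2.1) j⟩,
      by
        intro a b hab j
        exact Subtype.mk_le_mk.mpr (hTfmono _ _ (fun j' => (a j').2.1)
          (fun j' => hab j') j)⟩
  set ψ₀ : Fin N → Set.Icc (0:ℝ) α⁻¹ := OrderHom.lfp T with hψ₀def
  have hfix : T ψ₀ = ψ₀ := OrderHom.map_lfp T
  set ψe : Fin N → ℝ := fun j => (ψ₀ j : ℝ) with hψedef
  have hψenn : ∀ j, 0 ≤ ψe j := fun j => (ψ₀ j).2.1
  have hψefix : ∀ j, ψe j = Tf ψe j := by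
    intro j
    conv_lhs => rw [hψedef]
    rw [← hfix]
    rfl
  set φe : Fin K → ℝ := Φ ψe with hφedef
  have hφepos : ∀ i, 0 < φe i := hΦpos ψe hψenn
  have hψepos : ∀ j, 0 < ψe j := fun j => (hψefix j) ▸ hTfpos ψe hψenn j
  have hψe_eq : ∀ j, ψe j = F α (N : ℝ)⁻¹ (fun i => θ i j) φe := fun j => hψefix j
  have hφe_eq : ∀ i, φe i = F α (N : ℝ)⁻¹ (fun j => θ i j) ψe := fun i => rfl
  refine ⟨⟨φe, ψe⟩, ⟨hφepos, hψepos, ?_, ?_⟩, ?_⟩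
  · intro i
    have hd : 0 < α * (1 + (N : ℝ)⁻¹ * ∑ j, θ i j * ψe j) :=
      denom_pos hα hm (sum_nn (fun j => hθ i j) hψenn)
    show φe i * (α * (1 + (N : ℝ)⁻¹ * ∑ j, θ i j * ψe j)) = 1
    rw [hφe_eq i]
    exact inv_mul_cancel₀ (ne_of_gt hd)
  · intro j
    have hd : 0 < α * (1 + (N : ℝ)⁻¹ * ∑ i, θ i j * φe i) :=
      denom_pos hα hm (sum_nn (fun i => hθ i j) (fun i => (hφepos i).le))
    show ψe j * (α * (1 + (N : ℝ)⁻¹ * ∑ i, θ i j * φe i)) = 1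
    rw [hψe_eq j]
    exact inv_mul_cancel₀ (ne_of_gt hd)
  · rintro ⟨qφ, qψ⟩ ⟨hq1, hq2, hq3, hq4⟩
    have hqφ : ∀ i, qφ i = F α (N : ℝ)⁻¹ (fun j => θ i j) qψ := by
      intro i
      exact eq_inv_of_mul_eq_one_left (hq3 i)
    have hqψ : ∀ j, qψ j = F α (N : ℝ)⁻¹ (fun i => θ i j) qφ := by
      intro j
      exact eq_inv_of_mul_eq_one_left (hq4 j)
    have h1 : ∀ j, qψ j ≤ ψe j :=
      psi_le_psi hN θ hθ hα hψepos hq2 hφe_eq hqφ hψe_eq hqψ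
    have h2 : ∀ j, ψe j ≤ qψ j :=
      psi_le_psi hN θ hθ hα hq2 hψepos hqφ hφe_eq hqψ hψe_eq
    have hψeq : qψ = ψe := funext fun j => le_antisymm (h1 j) (h2 j)
    have hφeq : qφ = φe := funext fun i => by rw [hqφ i, hψeq]
    simp [hψeq, hφeq]
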